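/- Let W be a finitely-valued random variable jointly distributed with a finitely-valued sequence A^n = (A1, …, An), and let B^n and C^n be produced from A^n through a memoryless degraded cascade: there exist stochastic kernels q_B(b|a) and q_C(c|b) such that, conditioned on A^n, the pairs (B_i, C_i) for i = 1, …, n are mutually independent and independent of W, with Pr(B_i = b, C_i = c | A^n) = q_B(b | A_i) · q_C(c | b). Then ∑_{i=1}^{n} I( (A^{i−1}, B_{i+1}^n); C_i | W, C_{i+1}^n ) ≤ ∑_{i=1}^{n} I( B_{i+1}^n; A_i | W, A^{i−1} ). -/

import Mathlib

open scoped BigOperators Classical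

noncomputable section

namespace BRSec

variable {Ω : Type*} [Fintype Ω]

/-- Probability that the random variable `X` takes the value `a`, under the weight `p`. -/
def prb (p : Ω → ℝ) {α : Type*} (X : Ω → α) (a : α) : ℝ :=
  ∑ ω, if X ω = a then p ω else 0

/-- `p` is a probability mass function on the finite sample space `Ω`. -/
def IsPMF (p : Ω → ℝ) : Prop :=
  (∀ ω, 0 ≤ p ω) ∧ ∑ ω, p ω = 1

/-- Shannon entropy of the finitely-valued random variable `X`. -/
def H (p : Ω → ℝ) {α : Type*} [Fintype α] (X : Ω → α) : ℝ :=
  ∑ a, Real.negMulLog (prb p X a)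

/-- Mutual information `I(X;Y)`. -/
def MI (p : Ω → ℝ) {α β : Type*} [Fintype α] [Fintype β] (X : Ω → α) (Y : Ω → β) : ℝ :=
  H p X + H p Y - H p fun ω => (X ω, Y ω)

/-- Conditional mutual information `I(X;Y|Z)`. -/
def CMI (p : Ω → ℝ) {α β γ : Type*} [Fintype α] [Fintype β] [Fintype γ]
    (X : Ω → α) (Y : Ω → β) (Z : Ω → γ) : ℝ :=
  (H p fun ω => (X ω, Z ω)) + (H p fun ω => (Y ω, Z ω))
    - (H p fun ω => (X ω, Y ω, Z ω)) - H p Z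

/-- `X → Y → Z` is a Markov chain: `X` and `Z` are conditionally independent given `Y`. -/
def MarkovTriple (p : Ω → ℝ) {α β γ : Type*} (X : Ω → α) (Y : Ω → β) (Z : Ω → γ) : Prop :=
  ∀ a b c,
    prb p (fun ω => (X ω, Y ω, Z ω)) (a, b, c) * prb p Y b
      = prb p (fun ω => (X ω, Y ω)) (a, b) * prb p (fun ω => (Y ω, Z ω)) (b, c)


set_option linter.unusedSectionVars false
set_option linter.unusedVariables false
set_option maxHeartbeats 1000000
section lemmas
variable {p : Ω → ℝ} {α β : Type*}

lemma prb_nonneg (hp0 : ∀ ω, 0 ≤ p ω) (X : Ω → α) (a : α) : 0 ≤ prb p X a :=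
  Finset.sum_nonneg fun ω _ => by split <;> simp [hp0 ω]

lemma prb_le_of_imp (hp0 : ∀ ω, 0 ≤ p ω) {X : Ω → α} {Y : Ω → β} {u : α} {v : β}
    (h : ∀ ω, X ω = u → Y ω = v) : prb p X u ≤ prb p Y v := by
  apply Finset.sum_le_sum
  intro ω _
  by_cases hx : X ω = u
  · simp [hx, h ω hx]
  · simp only [hx, if_neg, if_false]
    split <;> simp [hp0 ω]

lemma le_prb_atom (hp0 : ∀ ω, 0 ≤ p ω) (X : Ω → α) (ω : Ω) : p ω ≤ prb p X (X ω) := by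
  classical
  have := Finset.single_le_sum (f := fun ω' => if X ω' = X ω then p ω' else 0)
    (fun ω' _ => by split <;> simp [hp0 ω']) (Finset.mem_univ ω)
  simpa [prb] using this

lemma prb_total (hp : IsPMF p) (X : Ω → α) [Fintype α] : ∑ a, prb p X a = 1 := by
  classical
  rw [← hp.2]
  unfold prb
  rw [Finset.sum_comm]
  exact Finset.sum_congr rfl fun ω _ => by simp

lemma prb_sum_fst [Fintype α] (X : Ω → α) (Y : Ω → β) (y : β) :
    ∑ x, prb p (fun ω => (X ω, Y ω)) (x, y) = prb p Y y := by
  classical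
  unfold prb
  rw [Finset.sum_comm]
  refine Finset.sum_congr rfl fun ω _ => ?_
  by_cases hy : Y ω = y
  · simp only [Prod.ext_iff, hy, and_true]
    rw [Finset.sum_ite_eq Finset.univ (X ω) (fun _ => p ω)]
    simp [hy]
  · simp [Prod.ext_iff, hy]

lemma prb_comp {J K : Type*} [Fintype J] (V : Ω → J) (f : J → K) (u : K) :
    prb p (fun ω => f (V ω)) u = ∑ v, if f v = u then prb p V v else 0 := by
  classical
  unfold prb
  have : ∀ v : J, (if f v = u then ∑ ω, if V ω = v then p ω else 0 else 0)
      = ∑ ω, if V ω = v then (if f v = u then p ω else 0) else 0 := by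
    intro v; split
    · exact Finset.sum_congr rfl fun ω _ => by split <;> simp_all
    · exact (Finset.sum_eq_zero fun ω _ => by split <;> simp_all).symm
  simp only [this]
  rw [Finset.sum_comm]
  refine Finset.sum_congr rfl fun ω _ => ?_
  rw [Finset.sum_ite_eq Finset.univ (V ω) (fun v => if f v = u then p ω else 0)]
  simp

/-- grouping lemma -/
lemma sum_prb_mul {J : Type*} [Fintype J] (V : Ω → J) (F : J → ℝ) :
    ∑ ω, p ω * F (V ω) = ∑ v, prb p V v * F v := by
  classical
  unfold prb
  simp only [Finset.sum_mul, ite_mul, zero_mul]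
  rw [Finset.sum_comm]
  refine Finset.sum_congr rfl fun ω _ => ?_
  rw [Finset.sum_ite_eq Finset.univ (V ω) (fun v => p ω * F v)]
  simp

lemma H_rep [Fintype α] (X : Ω → α) :
    H p X = -∑ ω, p ω * Real.log (prb p X (X ω)) := by
  classical
  unfold H prb
  simp only [Real.negMulLog, neg_mul, Finset.sum_neg_distrib, Finset.sum_mul, ite_mul, zero_mul]
  rw [Finset.sum_comm]
  congr 1
  refine Finset.sum_congr rfl fun ω _ => ?_
  rw [Finset.sum_ite_eq Finset.univ (X ω)
    (fun a => p ω * Real.log (∑ ω', if X ω' = a then p ω' else 0))]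
  simp


lemma prb_atom_congr {X : Ω → α} {Y : Ω → β} (f : α → β) (g : β → α)
    (hf : ∀ ω, f (X ω) = Y ω) (hg : ∀ ω, g (Y ω) = X ω) (ω : Ω) :
    prb p Y (Y ω) = prb p X (X ω) := by
  classical
  unfold prb
  refine Finset.sum_congr rfl fun ω' _ => ?_
  have key : Y ω' = Y ω ↔ X ω' = X ω := by
    constructor
    · intro h
      have := congrArg g h
      rwa [hg, hg] at this
    · intro h
      rw [← hf, ← hf, h]
  split <;> split <;> simp_all

lemma H_congr [Fintype α] [Fintype β] {X : Ω → α} {Y : Ω → β} (f : α → β) (g : β → α)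
    (hf : ∀ ω, f (X ω) = Y ω) (hg : ∀ ω, g (Y ω) = X ω) :
    H p X = H p Y := by
  rw [H_rep, H_rep]
  congr 1
  exact Finset.sum_congr rfl fun ω _ => by rw [prb_atom_congr f g hf hg ω]

end lemmas

section cmi
variable {p : Ω → ℝ}

variable {α β γ α' β' γ' : Type*} [Fintype α] [Fintype β] [Fintype γ]
  [Fintype α'] [Fintype β'] [Fintype γ']

lemma CMI_congr {X : Ω → α} {Y : Ω → β} {Z : Ω → γ} {X' : Ω → α'} {Y' : Ω → β'} {Z' : Ω → γ'}
    (fx : α → α') (gx : α' → α) (fy : β → β') (gy : β' → β) (fz : γ → γ') (gz : γ' → γ)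
    (hfx : ∀ ω, fx (X ω) = X' ω) (hgx : ∀ ω, gx (X' ω) = X ω)
    (hfy : ∀ ω, fy (Y ω) = Y' ω) (hgy : ∀ ω, gy (Y' ω) = Y ω)
    (hfz : ∀ ω, fz (Z ω) = Z' ω) (hgz : ∀ ω, gz (Z' ω) = Z ω) :
    CMI p X Y Z = CMI p X' Y' Z' := by
  unfold CMI
  have e1 : H p (fun ω => (X ω, Z ω)) = H p (fun ω => (X' ω, Z' ω)) :=
    H_congr (Prod.map fx fz) (Prod.map gx gz)
      (fun ω => by simp [Prod.map, hfx, hfz]) (fun ω => by simp [Prod.map, hgx, hgz])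
  have e2 : H p (fun ω => (Y ω, Z ω)) = H p (fun ω => (Y' ω, Z' ω)) :=
    H_congr (Prod.map fy fz) (Prod.map gy gz)
      (fun ω => by simp [Prod.map, hfy, hfz]) (fun ω => by simp [Prod.map, hgy, hgz])
  have e3 : H p (fun ω => (X ω, Y ω, Z ω)) = H p (fun ω => (X' ω, Y' ω, Z' ω)) :=
    H_congr (Prod.map fx (Prod.map fy fz)) (Prod.map gx (Prod.map gy gz))
      (fun ω => by simp [Prod.map, hfx, hfy, hfz])
      (fun ω => by simp [Prod.map, hgx, hgy, hgz])
  have e4 : H p Z = H p Z' := H_congr fz gz hfz hgz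
  rw [e1, e2, e3, e4]

lemma CMI_comm (X : Ω → α) (Y : Ω → β) (Z : Ω → γ) :
    CMI p X Y Z = CMI p Y X Z := by
  unfold CMI
  have e : H p (fun ω => (X ω, Y ω, Z ω)) = H p (fun ω => (Y ω, X ω, Z ω)) :=
    H_congr (fun t => (t.2.1, t.1, t.2.2)) (fun t => (t.2.1, t.1, t.2.2))
      (fun ω => rfl) (fun ω => rfl)
  rw [e]; ring

/-- chain rule: I(X,Y;Z|V) = I(X;Z|V) + I(Y;Z|X,V) -/
lemma CMI_chain {δ : Type*} [Fintype δ] (X : Ω → α) (Y : Ω → β) (Z : Ω → γ) (V : Ω → δ) :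
    CMI p (fun ω => (X ω, Y ω)) Z V
      = CMI p X Z V + CMI p Y Z (fun ω => (X ω, V ω)) := by
  unfold CMI
  have e1 : H p (fun ω => ((X ω, Y ω), V ω)) = H p (fun ω => (Y ω, X ω, V ω)) :=
    H_congr (fun t => (t.1.2, t.1.1, t.2)) (fun t => ((t.2.1, t.1), t.2.2))
      (fun ω => rfl) (fun ω => rfl)
  have e2 : H p (fun ω => ((X ω, Y ω), Z ω, V ω)) = H p (fun ω => (Y ω, Z ω, X ω, V ω)) :=
    H_congr (fun t => (t.1.2, t.2.1, t.1.1, t.2.2)) (fun t => ((t.2.2.1, t.1), t.2.1, t.2.2.2))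
      (fun ω => rfl) (fun ω => rfl)
  have e3 : H p (fun ω => (Z ω, X ω, V ω)) = H p (fun ω => (X ω, Z ω, V ω)) :=
    H_congr (fun t => (t.2.1, t.1, t.2.2)) (fun t => (t.2.1, t.1, t.2.2))
      (fun ω => rfl) (fun ω => rfl)
  rw [e1, e2, e3]; ring

lemma CMI_const_left (k : α) (Y : Ω → β) (Z : Ω → γ) :
    CMI p (fun _ => k) Y Z = 0 := by
  unfold CMI
  have e1 : H p (fun ω => ((fun _:Ω => k) ω, Z ω)) = H p Z :=
    H_congr (fun t => t.2) (fun z => (k, z)) (fun ω => rfl) (fun ω => rfl)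
  have e2 : H p (fun ω => ((fun _:Ω => k) ω, Y ω, Z ω)) = H p (fun ω => (Y ω, Z ω)) :=
    H_congr (fun t => t.2) (fun t => (k, t)) (fun ω => rfl) (fun ω => rfl)
  rw [e1, e2]; ring


lemma CMI_rep (X : Ω → α) (Y : Ω → β) (Z : Ω → γ) :
    CMI p X Y Z = ∑ ω, p ω *
      (Real.log (prb p (fun ω' => (X ω', Y ω', Z ω')) (X ω, Y ω, Z ω))
        + Real.log (prb p Z (Z ω))
        - Real.log (prb p (fun ω' => (X ω', Z ω')) (X ω, Z ω))
        - Real.log (prb p (fun ω' => (Y ω', Z ω')) (Y ω, Z ω))) := by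
  unfold CMI
  rw [H_rep, H_rep, H_rep, H_rep]
  rw [show ∀ a b c d : ℝ, -a + -b - -c - -d = c + d - a - b from fun a b c d => by ring]
  rw [← Finset.sum_add_distrib, ← Finset.sum_sub_distrib, ← Finset.sum_sub_distrib]
  exact Finset.sum_congr rfl fun ω _ => by ring

lemma CMI_nonneg (hp : IsPMF p) (X : Ω → α) (Y : Ω → β) (Z : Ω → γ) :
    0 ≤ CMI p X Y Z := by
  classical
  set q3 : α × β × γ → ℝ := prb p (fun ω => (X ω, Y ω, Z ω)) with hq3
  set qxz : α × γ → ℝ := prb p (fun ω => (X ω, Z ω)) with hqxz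
  set qyz : β × γ → ℝ := prb p (fun ω => (Y ω, Z ω)) with hqyz
  set qz : γ → ℝ := prb p Z with hqz
  set G : α × β × γ → ℝ := fun v =>
    Real.log (q3 v) + Real.log (qz v.2.2)
      - Real.log (qxz (v.1, v.2.2)) - Real.log (qyz v.2) with hG
  have hrep : CMI p X Y Z = ∑ v, q3 v * G v := by
    rw [CMI_rep]
    rw [← sum_prb_mul (fun ω => (X ω, Y ω, Z ω)) G]
  set t : α × β × γ → ℝ := fun v =>
    if qz v.2.2 = 0 then 0 else qxz (v.1, v.2.2) * qyz v.2 / qz v.2.2 with ht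
  have hbound : ∀ v, q3 v - t v ≤ q3 v * G v := by
    intro v
    obtain ⟨x, y, z⟩ := v
    by_cases h0 : q3 (x, y, z) = 0
    · simp only [h0, zero_mul, zero_sub, neg_nonpos, ht]
      split
      · exact le_refl 0
      · exact div_nonneg (mul_nonneg (prb_nonneg hp.1 _ _) (prb_nonneg hp.1 _ _))
          (prb_nonneg hp.1 _ _)
    · have hq3pos : 0 < q3 (x, y, z) := lt_of_le_of_ne (prb_nonneg hp.1 _ _) (Ne.symm h0)
      have hxz : q3 (x, y, z) ≤ qxz (x, z) :=
        prb_le_of_imp hp.1 (fun ω hw => by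
          simp only [Prod.mk.injEq] at hw ⊢; exact ⟨hw.1, hw.2.2⟩)
      have hyz : q3 (x, y, z) ≤ qyz (y, z) :=
        prb_le_of_imp hp.1 (fun ω hw => by
          simp only [Prod.mk.injEq] at hw ⊢; exact ⟨hw.2.1, hw.2.2⟩)
      have hz : q3 (x, y, z) ≤ qz z :=
        prb_le_of_imp hp.1 (fun ω hw => by
          simp only [Prod.mk.injEq] at hw ⊢; exact hw.2.2)
      have hxzpos := lt_of_lt_of_le hq3pos hxz
      have hyzpos := lt_of_lt_of_le hq3pos hyz
      have hzpos := lt_of_lt_of_le hq3pos hz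
      have htv : t (x, y, z) = qxz (x, z) * qyz (y, z) / qz z := by
        simp [ht, ne_of_gt hzpos]
      have hGneg : -G (x, y, z)
          = Real.log (qxz (x, z) * qyz (y, z) / (q3 (x, y, z) * qz z)) := by
        rw [Real.log_div (by positivity) (by positivity), Real.log_mul (ne_of_gt hxzpos)
          (ne_of_gt hyzpos), Real.log_mul (ne_of_gt hq3pos) (ne_of_gt hzpos)]
        simp [hG]; ring
      have hle : -G (x, y, z) ≤ qxz (x, z) * qyz (y, z) / (q3 (x, y, z) * qz z) - 1 := by
        rw [hGneg]
        exact Real.log_le_sub_one_of_pos (by positivity)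
      have := mul_le_mul_of_nonneg_left hle (le_of_lt hq3pos)
      have hcalc : q3 (x, y, z) * (qxz (x, z) * qyz (y, z) / (q3 (x, y, z) * qz z) - 1)
          = t (x, y, z) - q3 (x, y, z) := by
        rw [htv]
        field_simp
      rw [hcalc] at this
      linarith [this]
  have hsum_t : ∑ v, t v = 1 := by
    rw [show (∑ v, t v) = ∑ z, ∑ x, ∑ y, t (x, y, z) from ?_]
    · have : ∀ z, (∑ x, ∑ y, t (x, y, z)) = if qz z = 0 then 0 else qz z := by
        intro z
        by_cases h : qz z = 0
        · simp [ht, h]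
        · simp only [ht, h, if_neg, if_false]
          rw [show (∑ x, ∑ y, qxz (x, z) * qyz (y, z) / qz z)
              = (∑ x, qxz (x, z)) * (∑ y, qyz (y, z)) / qz z from ?_]
          · rw [hqxz, hqyz, prb_sum_fst X Z z, prb_sum_fst Y Z z, hqz]
            field_simp
          · rw [Finset.sum_mul, Finset.sum_div]
            refine Finset.sum_congr rfl fun x _ => ?_
            rw [Finset.mul_sum, Finset.sum_div]
      rw [Finset.sum_congr rfl fun z _ => this z]
      rw [show (∑ z, if qz z = 0 then 0 else qz z) = ∑ z, qz z from
        Finset.sum_congr rfl fun z _ => by split <;> simp_all]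
      exact prb_total hp Z
    · calc ∑ v : α × β × γ, t v = ∑ x, ∑ y, ∑ z, t (x, y, z) := by
            rw [Fintype.sum_prod_type]
            exact Finset.sum_congr rfl fun x _ =>
              Fintype.sum_prod_type (f := fun w : β × γ => t (x, w.1, w.2))
        _ = ∑ x, ∑ z, ∑ y, t (x, y, z) := Finset.sum_congr rfl fun x _ => Finset.sum_comm
        _ = ∑ z, ∑ x, ∑ y, t (x, y, z) := Finset.sum_comm
  have hsum_q3 : ∑ v, q3 v = 1 := prb_total hp _
  calc (0:ℝ) = ∑ v, (q3 v - t v) := by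
        rw [Finset.sum_sub_distrib, hsum_q3, hsum_t]; ring
    _ ≤ ∑ v, q3 v * G v := Finset.sum_le_sum fun v _ => hbound v
    _ = CMI p X Y Z := hrep.symm

lemma CMI_eq_zero (hp : IsPMF p) {X : Ω → α} {Y : Ω → β} {Z : Ω → γ}
    (hM : ∀ x y z, prb p (fun ω => (X ω, Y ω, Z ω)) (x, y, z) * prb p Z z
      = prb p (fun ω => (X ω, Z ω)) (x, z) * prb p (fun ω => (Y ω, Z ω)) (y, z)) :
    CMI p X Y Z = 0 := by
  rw [CMI_rep]
  refine Finset.sum_eq_zero fun ω _ => ?_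
  by_cases hpω : p ω = 0
  · simp [hpω]
  · have hppos : 0 < p ω := lt_of_le_of_ne (hp.1 ω) (Ne.symm hpω)
    have h3 := lt_of_lt_of_le hppos (le_prb_atom hp.1 (fun ω' => (X ω', Y ω', Z ω')) ω)
    have hxz := lt_of_lt_of_le hppos (le_prb_atom hp.1 (fun ω' => (X ω', Z ω')) ω)
    have hyz := lt_of_lt_of_le hppos (le_prb_atom hp.1 (fun ω' => (Y ω', Z ω')) ω)
    have hz := lt_of_lt_of_le hppos (le_prb_atom hp.1 Z ω)
    have key := hM (X ω) (Y ω) (Z ω)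
    have : Real.log (prb p (fun ω' => (X ω', Y ω', Z ω')) (X ω, Y ω, Z ω))
        + Real.log (prb p Z (Z ω))
        = Real.log (prb p (fun ω' => (X ω', Z ω')) (X ω, Z ω))
          + Real.log (prb p (fun ω' => (Y ω', Z ω')) (Y ω, Z ω)) := by
      rw [← Real.log_mul (ne_of_gt h3) (ne_of_gt hz),
        ← Real.log_mul (ne_of_gt hxz) (ne_of_gt hyz), key]
    rw [show ∀ a b c d : ℝ, a + b - c - d = (a + b) - (c + d) from fun a b c d => by ring,
      this]
    simp

/-- DPI: if I(X;Z | (Y,V)) = 0 then I(X;Z|V) ≤ I(X;Y|V). -/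
lemma CMI_dpi {δ : Type*} [Fintype δ] (hp : IsPMF p)
    (X : Ω → α) (Y : Ω → β) (Z : Ω → γ) (V : Ω → δ)
    (h0 : CMI p Z X (fun ω => (Y ω, V ω)) = 0) :
    CMI p X Z V ≤ CMI p X Y V := by
  have e1 := CMI_chain (p := p) Y Z X V
  have e2 := CMI_chain (p := p) Z Y X V
  have ecomm : CMI p (fun ω => (Y ω, Z ω)) X V = CMI p (fun ω => (Z ω, Y ω)) X V := by
    refine CMI_congr (fun t => (t.2, t.1)) (fun t => (t.2, t.1)) id id id id
      (fun ω => rfl) (fun ω => rfl) (fun ω => rfl) (fun ω => rfl) (fun ω => rfl) (fun ω => rfl)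
  have hyx : CMI p X Y V = CMI p Y X V := CMI_comm X Y V
  have hzx : CMI p X Z V = CMI p Z X V := CMI_comm X Z V
  have hnn : 0 ≤ CMI p Y X (fun ω => (Z ω, V ω)) := CMI_nonneg hp _ _ _
  have key := e1.symm.trans (ecomm.trans e2)
  rw [h0] at key
  linarith [key, hnn]

lemma CMI_left_unique [Unique α] (X : Ω → α) (Y : Ω → β) (Z : Ω → γ) :
    CMI p X Y Z = 0 := by
  have hX : X = fun _ => (default : α) := funext fun ω => Subsingleton.elim _ _
  rw [hX]; exact CMI_const_left _ _ _

lemma CMI_mid_unique [Unique β] (X : Ω → α) (Y : Ω → β) (Z : Ω → γ) :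
    CMI p X Y Z = 0 := by
  rw [CMI_comm]; exact CMI_left_unique _ _ _

end cmi

section glue
variable {n : ℕ}

def glue (i : Fin n) {δ : Type*} (lo : {j : Fin n // j < i} → δ) (mid : δ)
    (hi : {j : Fin n // i < j} → δ) : Fin n → δ :=
  fun j => if h : j < i then lo ⟨j, h⟩ else if h' : i < j then hi ⟨j, h'⟩ else mid

variable {i : Fin n} {δ : Type*}

lemma glue_lo (lo : {j : Fin n // j < i} → δ) (mid hi) (j : {j : Fin n // j < i}) :
    glue i lo mid hi j.1 = lo j := by
  unfold glue
  rw [dif_pos j.2]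

lemma glue_mid (lo : {j : Fin n // j < i} → δ) (mid hi) :
    glue i lo mid hi i = mid := by
  unfold glue
  rw [dif_neg (lt_irrefl i), dif_neg (lt_irrefl i)]

lemma glue_hi (lo : {j : Fin n // j < i} → δ) (mid hi) (j : {j : Fin n // i < j}) :
    glue i lo mid hi j.1 = hi j := by
  unfold glue
  rw [dif_neg (asymm j.2), dif_pos j.2]

lemma glue_eval (a : Fin n → δ) :
    glue i (fun j => a j.1) (a i) (fun j => a j.1) = a := by
  funext j
  unfold glue
  split
  · rfl
  · split
    · rfl
    · next h1 h2 => rw [le_antisymm (not_lt.mp h2) (not_lt.mp h1)]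

def glueEquiv (i : Fin n) (δ : Type*) :
    (Fin n → δ) ≃ ({j : Fin n // j < i} → δ) × δ × ({j : Fin n // i < j} → δ) where
  toFun a := (fun j => a j.1, a i, fun j => a j.1)
  invFun t := glue i t.1 t.2.1 t.2.2
  left_inv a := glue_eval a
  right_inv t := by
    obtain ⟨lo, mid, hi⟩ := t
    refine Prod.ext ?_ (Prod.ext ?_ ?_)
    · funext j; exact glue_lo lo mid hi j
    · exact glue_mid lo mid hi
    · funext j; exact glue_hi lo mid hi j

lemma sum_glue {M : Type*} [AddCommMonoid M] (i : Fin n) [Fintype δ] (f : (Fin n → δ) → M) :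
    ∑ a : Fin n → δ, f a
      = ∑ lo : {j : Fin n // j < i} → δ, ∑ mid : δ, ∑ hi : {j : Fin n // i < j} → δ,
          f (glue i lo mid hi) := by
  classical
  rw [← Equiv.sum_comp (glueEquiv i δ).symm f]
  rw [Fintype.sum_prod_type]
  refine Finset.sum_congr rfl fun lo _ => ?_
  rw [Fintype.sum_prod_type]
  rfl

lemma prod_trichotomy (i : Fin n) (F : Fin n → ℝ) :
    ∏ j, F j = (∏ j : {j : Fin n // j < i}, F j.1) * F i * ∏ j : {j : Fin n // i < j}, F j.1 := by
  classical
  rw [← Finset.prod_filter_mul_prod_filter_not Finset.univ (· < i) F]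
  rw [← Finset.prod_filter_mul_prod_filter_not (Finset.univ.filter (¬ · < i)) (i < ·) F]
  have h1 : (Finset.univ.filter (¬ · < i)).filter (i < ·) = Finset.univ.filter (i < ·) := by
    ext j; simp only [Finset.mem_filter, Finset.mem_univ, true_and]
    exact ⟨fun h => h.2, fun h => ⟨asymm h, h⟩⟩
  have h2 : (Finset.univ.filter (¬ · < i)).filter (¬ i < ·) = {i} := by
    ext j; simp only [Finset.mem_filter, Finset.mem_univ, true_and, Finset.mem_singleton]
    constructor
    · intro h; exact le_antisymm (not_lt.mp h.2) (not_lt.mp h.1)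
    · intro h; subst h; exact ⟨lt_irrefl _, lt_irrefl _⟩
  rw [h1, h2, Finset.prod_singleton]
  rw [Finset.prod_subtype (p := fun j => j < i) (Finset.univ.filter (fun j => j < i))
      (by intro j; simp) (fun j => F j),
    Finset.prod_subtype (p := fun j => i < j) (Finset.univ.filter (fun j => i < j))
      (by intro j; simp) (fun j => F j)]
  ring

end glue

section factor
variable {p : Ω → ℝ} {α β γ : Type*} [Fintype α] [Fintype β] [Fintype γ]

lemma prb_map_eq {X : Ω → α} (f : α → β) (hf : Function.Injective f) (a : α) :
    prb p (fun ω => f (X ω)) (f a) = prb p X a := by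
  unfold prb
  refine Finset.sum_congr rfl fun ω _ => ?_
  have : f (X ω) = f a ↔ X ω = a := ⟨fun h => hf h, fun h => by rw [h]⟩
  split <;> split <;> simp_all

lemma prb_pair_sum_snd (X : Ω → α) (Y : Ω → β) (Z : Ω → γ) (x : α) (z : γ) :
    prb p (fun ω => (X ω, Z ω)) (x, z)
      = ∑ y, prb p (fun ω => (X ω, Y ω, Z ω)) (x, y, z) := by
  rw [← prb_sum_fst Y (fun ω => (X ω, Z ω)) (x, z)]
  refine Finset.sum_congr rfl fun y _ => ?_
  have := prb_map_eq (p := p) (X := fun ω => (X ω, Y ω, Z ω))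
    (fun t => (t.2.1, t.1, t.2.2)) (fun s t h => by
      simp only [Prod.mk.injEq, Prod.ext_iff] at h ⊢; tauto) (x, y, z)
  simp only at this
  exact this

lemma prb_pair_sum_fst (X : Ω → α) (Y : Ω → β) (Z : Ω → γ) (y : β) (z : γ) :
    prb p (fun ω => (Y ω, Z ω)) (y, z)
      = ∑ x, prb p (fun ω => (X ω, Y ω, Z ω)) (x, y, z) :=
  (prb_sum_fst X (fun ω => (Y ω, Z ω)) (y, z)).symm

lemma prb_sum_both (X : Ω → α) (Y : Ω → β) (Z : Ω → γ) (z : γ) :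
    prb p Z z = ∑ x, ∑ y, prb p (fun ω => (X ω, Y ω, Z ω)) (x, y, z) := by
  rw [← prb_sum_fst (fun ω => (X ω, Y ω)) Z z]
  rw [Fintype.sum_prod_type]
  refine Finset.sum_congr rfl fun x _ => Finset.sum_congr rfl fun y _ => ?_
  have := prb_map_eq (p := p) (X := fun ω => (X ω, Y ω, Z ω))
    (fun t => ((t.1, t.2.1), t.2.2)) (fun s t h => by
      simp only [Prod.mk.injEq, Prod.ext_iff] at h ⊢; tauto) (x, y, z)
  simp only at this
  exact this

/-- Factorized joint implies the Markov-style product identity. -/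
lemma markov_of_factor {X : Ω → α} {Y : Ω → β} {Z : Ω → γ}
    {F : α → γ → ℝ} {G : β → γ → ℝ}
    (hfac : ∀ x y z, prb p (fun ω => (X ω, Y ω, Z ω)) (x, y, z) = F x z * G y z) :
    ∀ x y z, prb p (fun ω => (X ω, Y ω, Z ω)) (x, y, z) * prb p Z z
      = prb p (fun ω => (X ω, Z ω)) (x, z) * prb p (fun ω => (Y ω, Z ω)) (y, z) := by
  intro x y z
  rw [prb_pair_sum_snd X Y Z, prb_pair_sum_fst X Y Z, prb_sum_both X Y Z, hfac]
  simp only [hfac]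
  rw [show (∑ x', ∑ y', F x' z * G y' z) = (∑ x', F x' z) * (∑ y', G y' z) from by
      rw [Finset.sum_mul]; exact Finset.sum_congr rfl fun x' _ => by rw [Finset.mul_sum],
    show (∑ y', F x z * G y' z) = F x z * ∑ y', G y' z from by rw [Finset.mul_sum],
    show (∑ x', F x' z * G y z) = (∑ x', F x' z) * G y z from by rw [Finset.sum_mul]]
  ring

lemma CMI_eq_zero_of_factor (hp : IsPMF p) {X : Ω → α} {Y : Ω → β} {Z : Ω → γ}
    {F : α → γ → ℝ} {G : β → γ → ℝ}
    (hfac : ∀ x y z, prb p (fun ω => (X ω, Y ω, Z ω)) (x, y, z) = F x z * G y z) :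
    CMI p X Y Z = 0 :=
  CMI_eq_zero hp (markov_of_factor hfac)

end factor

section main
variable {p : Ω → ℝ} {n : ℕ} {𝒲 α β γ : Type*}
  [Fintype 𝒲] [Fintype α] [Fintype β] [Fintype γ]
  {W : Ω → 𝒲} {A : Ω → Fin n → α} {B : Ω → Fin n → β} {C : Ω → Fin n → γ}
  {qB : α → β → ℝ} {qC : β → γ → ℝ}

lemma glue_lo_fun {i : Fin n} {δ : Type*} (lo : {j : Fin n // j < i} → δ) (mid hi) :
    (fun j : {j : Fin n // j < i} => glue i lo mid hi j.1) = lo :=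
  funext (glue_lo lo mid hi)

lemma glue_hi_fun {i : Fin n} {δ : Type*} (lo : {j : Fin n // j < i} → δ) (mid hi) :
    (fun j : {j : Fin n // i < j} => glue i lo mid hi j.1) = hi :=
  funext (glue_hi lo mid hi)

lemma sum_factor {δ : Type*} [Fintype δ] {K c : ℝ} {f g : δ → ℝ} (h : ∑ x, f x = c)
    (hg : ∀ x, g x = K * f x) : ∑ x, g x = K * c := by
  rw [Finset.sum_congr rfl fun x _ => hg x, ← Finset.mul_sum, h]

lemma sum_factor1 {δ : Type*} [Fintype δ] {K : ℝ} {f g : δ → ℝ} (h : ∑ x, f x = 1)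
    (hg : ∀ x, g x = K * f x) : ∑ x, g x = K := by
  rw [Finset.sum_congr rfl fun x _ => hg x, ← Finset.mul_sum, h, mul_one]

lemma star
    (hqB1 : ∀ a, ∑ b, qB a b = 1) (hqC1 : ∀ b, ∑ c, qC b c = 1)
    (hjoint : ∀ (w : 𝒲) (a : Fin n → α) (b : Fin n → β) (c : Fin n → γ),
      prb p (fun ω => (W ω, A ω, B ω, C ω)) (w, a, b, c)
        = prb p (fun ω => (W ω, A ω)) (w, a) * ∏ i, (qB (a i) (b i) * qC (b i) (c i)))
    (i : Fin n) (c0 : γ) (w : 𝒲) (a0 : α) (al : {j : Fin n // j < i} → α)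
    (bh : {j : Fin n // i < j} → β) (ch : {j : Fin n // i < j} → γ) :
    prb p (fun ω => (C ω i, W ω, A ω i,
        (fun j : {j : Fin n // j < i} => A ω j.1),
        (fun j : {j : Fin n // i < j} => B ω j.1),
        (fun j : {j : Fin n // i < j} => C ω j.1))) (c0, w, a0, al, bh, ch)
      = (∑ b, qB a0 b * qC b c0) * (∏ j : {j : Fin n // i < j}, qC (bh j) (ch j))
          * (∑ ah : {j : Fin n // i < j} → α,
              prb p (fun ω => (W ω, A ω)) (w, glue i al a0 ah)
                * ∏ j : {j : Fin n // i < j}, qB (ah j) (bh j)) := by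
  classical
  have h0 := prb_comp (p := p) (V := fun ω => (W ω, A ω, B ω, C ω))
    (fun v => (v.2.2.2 i, v.1, v.2.1 i,
      (fun j : {j : Fin n // j < i} => v.2.1 j.1),
      (fun j : {j : Fin n // i < j} => v.2.2.1 j.1),
      (fun j : {j : Fin n // i < j} => v.2.2.2 j.1))) (c0, w, a0, al, bh, ch)
  refine h0.trans ?_
  rw [Fintype.sum_prod_type]
  simp only [Fintype.sum_prod_type, sum_glue i, hjoint, glue_mid, glue_lo_fun, glue_hi_fun,
    Prod.mk.injEq, ite_and, Finset.sum_ite_irrel, Finset.sum_ite_eq', Finset.mem_univ, if_true,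
    Finset.sum_const_zero, prod_trichotomy i, glue_lo, glue_hi, Finset.prod_mul_distrib]
  have hcl : ∀ bl : {j : Fin n // j < i} → β,
      ∑ cl : {j : Fin n // j < i} → γ, ∏ j : {j : Fin n // j < i}, qC (bl j) (cl j) = 1 := by
    intro bl
    rw [← Fintype.prod_sum (f := fun (j : {j : Fin n // j < i}) (c : γ) => qC (bl j) c)]
    simp [hqC1]
  have hblsum : ∑ bl : {j : Fin n // j < i} → β,
      ∏ j : {j : Fin n // j < i}, qB (al j) (bl j) = 1 := by
    rw [← Fintype.prod_sum (f := fun (j : {j : Fin n // j < i}) (b : β) => qB (al j) b)]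
    simp [hqB1]
  trans (∑ ah : {j : Fin n // i < j} → α,
      (prb p (fun ω => (W ω, A ω)) (w, glue i al a0 ah)
          * ∏ j : {j : Fin n // i < j}, qB (ah j) (bh j))
        * ((∏ j : {j : Fin n // i < j}, qC (bh j) (ch j)) * ∑ b, qB a0 b * qC b c0))
  · refine Finset.sum_congr rfl fun ah _ => ?_
    calc ∑ bl : {j : Fin n // j < i} → β, ∑ b0 : β, ∑ cl : {j : Fin n // j < i} → γ,
          prb p (fun ω => (W ω, A ω)) (w, glue i al a0 ah) *
            (((∏ j : {j : Fin n // j < i}, qB (al j) (bl j))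
                * ∏ j : {j : Fin n // j < i}, qC (bl j) (cl j)) *
              (qB a0 b0 * qC b0 c0) *
              ((∏ j : {j : Fin n // i < j}, qB (ah j) (bh j))
                * ∏ j : {j : Fin n // i < j}, qC (bh j) (ch j)))
        = ∑ bl : {j : Fin n // j < i} → β, ∑ b0 : β,
            (prb p (fun ω => (W ω, A ω)) (w, glue i al a0 ah)
              * ((∏ j : {j : Fin n // j < i}, qB (al j) (bl j)) * (qB a0 b0 * qC b0 c0) *
                ((∏ j : {j : Fin n // i < j}, qB (ah j) (bh j))
                  * ∏ j : {j : Fin n // i < j}, qC (bh j) (ch j)))) :=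
          Finset.sum_congr rfl fun bl _ => Finset.sum_congr rfl fun b0 _ =>
            sum_factor1 (f := fun cl : {j : Fin n // j < i} → γ =>
              ∏ j : {j : Fin n // j < i}, qC (bl j) (cl j)) (hcl bl) (fun cl => by ring)
      _ = ∑ bl : {j : Fin n // j < i} → β,
            ((prb p (fun ω => (W ω, A ω)) (w, glue i al a0 ah)
              * ((∏ j : {j : Fin n // j < i}, qB (al j) (bl j)) *
                ((∏ j : {j : Fin n // i < j}, qB (ah j) (bh j))
                  * ∏ j : {j : Fin n // i < j}, qC (bh j) (ch j))))
              * ∑ b, qB a0 b * qC b c0) :=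
          Finset.sum_congr rfl fun bl _ =>
            sum_factor (f := fun b0 : β => qB a0 b0 * qC b0 c0) rfl (fun b0 => by ring)
      _ = (prb p (fun ω => (W ω, A ω)) (w, glue i al a0 ah)
            * ∏ j : {j : Fin n // i < j}, qB (ah j) (bh j))
          * ((∏ j : {j : Fin n // i < j}, qC (bh j) (ch j)) * ∑ b, qB a0 b * qC b c0) :=
          sum_factor1 (f := fun bl : {j : Fin n // j < i} → β =>
            ∏ j : {j : Fin n // j < i}, qB (al j) (bl j)) hblsum (fun bl => by ring)
  · rw [← Finset.sum_mul]
    ring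

lemma star5
    (hqB1 : ∀ a, ∑ b, qB a b = 1) (hqC1 : ∀ b, ∑ c, qC b c = 1)
    (hjoint : ∀ (w : 𝒲) (a : Fin n → α) (b : Fin n → β) (c : Fin n → γ),
      prb p (fun ω => (W ω, A ω, B ω, C ω)) (w, a, b, c)
        = prb p (fun ω => (W ω, A ω)) (w, a) * ∏ i, (qB (a i) (b i) * qC (b i) (c i)))
    (i : Fin n) (w : 𝒲) (a0 : α) (al : {j : Fin n // j < i} → α)
    (bh : {j : Fin n // i < j} → β) (ch : {j : Fin n // i < j} → γ) :
    prb p (fun ω => (W ω, A ω i,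
        (fun j : {j : Fin n // j < i} => A ω j.1),
        (fun j : {j : Fin n // i < j} => B ω j.1),
        (fun j : {j : Fin n // i < j} => C ω j.1))) (w, a0, al, bh, ch)
      = (∏ j : {j : Fin n // i < j}, qC (bh j) (ch j))
          * (∑ ah : {j : Fin n // i < j} → α,
              prb p (fun ω => (W ω, A ω)) (w, glue i al a0 ah)
                * ∏ j : {j : Fin n // i < j}, qB (ah j) (bh j)) := by
  classical
  have hsum := prb_sum_fst (p := p) (X := fun ω => C ω i)
    (Y := fun ω => (W ω, A ω i,
        (fun j : {j : Fin n // j < i} => A ω j.1),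
        (fun j : {j : Fin n // i < j} => B ω j.1),
        (fun j : {j : Fin n // i < j} => C ω j.1))) (w, a0, al, bh, ch)
  rw [← hsum]
  have hr1 : ∑ c0 : γ, ∑ b, qB a0 b * qC b c0 = 1 := by
    rw [Finset.sum_comm]
    calc ∑ b : β, ∑ c0 : γ, qB a0 b * qC b c0 = ∑ b : β, qB a0 b * ∑ c0, qC b c0 :=
          Finset.sum_congr rfl fun b _ => by rw [← Finset.mul_sum]
      _ = 1 := by simp only [hqC1, mul_one, hqB1]
  calc ∑ c0 : γ, prb p (fun ω => (C ω i, W ω, A ω i,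
        (fun j : {j : Fin n // j < i} => A ω j.1),
        (fun j : {j : Fin n // i < j} => B ω j.1),
        (fun j : {j : Fin n // i < j} => C ω j.1))) (c0, w, a0, al, bh, ch)
      = ∑ c0 : γ, ((∏ j : {j : Fin n // i < j}, qC (bh j) (ch j))
          * (∑ ah : {j : Fin n // i < j} → α,
              prb p (fun ω => (W ω, A ω)) (w, glue i al a0 ah)
                * ∏ j : {j : Fin n // i < j}, qB (ah j) (bh j)))
          * ∑ b, qB a0 b * qC b c0 :=
        Finset.sum_congr rfl fun c0 _ =>
          (star hqB1 hqC1 hjoint i c0 w a0 al bh ch).trans (by ring)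
    _ = _ := by rw [← Finset.mul_sum, hr1, mul_one]

lemma ci1 (hp : IsPMF p)
    (hqB1 : ∀ a, ∑ b, qB a b = 1) (hqC1 : ∀ b, ∑ c, qC b c = 1)
    (hjoint : ∀ (w : 𝒲) (a : Fin n → α) (b : Fin n → β) (c : Fin n → γ),
      prb p (fun ω => (W ω, A ω, B ω, C ω)) (w, a, b, c)
        = prb p (fun ω => (W ω, A ω)) (w, a) * ∏ i, (qB (a i) (b i) * qC (b i) (c i)))
    (i : Fin n) :
    CMI p (fun ω => fun j : {j : Fin n // i < j} => C ω j.1) (fun ω => A ω i)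
      (fun ω => ((fun j : {j : Fin n // i < j} => B ω j.1),
        (W ω, fun j : {j : Fin n // j < i} => A ω j.1))) = 0 := by
  classical
  refine CMI_eq_zero_of_factor hp
    (F := fun (x : {j : Fin n // i < j} → γ)
        (z : ({j : Fin n // i < j} → β) × 𝒲 × ({j : Fin n // j < i} → α)) =>
      ∏ j : {j : Fin n // i < j}, qC (z.1 j) (x j))
    (G := fun (y : α)
        (z : ({j : Fin n // i < j} → β) × 𝒲 × ({j : Fin n // j < i} → α)) =>
      ∑ ah : {j : Fin n // i < j} → α,
        prb p (fun ω => (W ω, A ω)) (z.2.1, glue i z.2.2 y ah)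
          * ∏ j : {j : Fin n // i < j}, qB (ah j) (z.1 j)) ?_
  intro x y z
  have h5 := prb_map_eq (p := p)
    (X := fun ω => (W ω, A ω i,
        (fun j : {j : Fin n // j < i} => A ω j.1),
        (fun j : {j : Fin n // i < j} => B ω j.1),
        (fun j : {j : Fin n // i < j} => C ω j.1)))
    (fun u => (u.2.2.2.2, u.2.1, (u.2.2.2.1, (u.1, u.2.2.1))))
    (fun u v h => by
      obtain ⟨w1, a1, al1, bh1, ch1⟩ := u
      obtain ⟨w2, a2, al2, bh2, ch2⟩ := v
      simp only [Prod.mk.injEq] at h ⊢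
      tauto)
    (z.2.1, y, z.2.2, z.1, x)
  exact h5.trans (star5 hqB1 hqC1 hjoint i z.2.1 y z.2.2 z.1 x)

lemma ci2 (hp : IsPMF p)
    (hqB1 : ∀ a, ∑ b, qB a b = 1) (hqC1 : ∀ b, ∑ c, qC b c = 1)
    (hjoint : ∀ (w : 𝒲) (a : Fin n → α) (b : Fin n → β) (c : Fin n → γ),
      prb p (fun ω => (W ω, A ω, B ω, C ω)) (w, a, b, c)
        = prb p (fun ω => (W ω, A ω)) (w, a) * ∏ i, (qB (a i) (b i) * qC (b i) (c i)))
    (i : Fin n) :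
    CMI p (fun ω => C ω i) (fun ω => fun j : {j : Fin n // i < j} => B ω j.1)
      (fun ω => (A ω i, ((fun j : {j : Fin n // j < i} => A ω j.1),
        (W ω, fun j : {j : Fin n // i < j} => C ω j.1)))) = 0 := by
  classical
  refine CMI_eq_zero_of_factor hp
    (F := fun (x : γ)
        (z : α × ({j : Fin n // j < i} → α) × 𝒲 × ({j : Fin n // i < j} → γ)) =>
      ∑ b, qB z.1 b * qC b x)
    (G := fun (y : {j : Fin n // i < j} → β)
        (z : α × ({j : Fin n // j < i} → α) × 𝒲 × ({j : Fin n // i < j} → γ)) =>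
      (∏ j : {j : Fin n // i < j}, qC (y j) (z.2.2.2 j))
        * ∑ ah : {j : Fin n // i < j} → α,
            prb p (fun ω => (W ω, A ω)) (z.2.2.1, glue i z.2.1 z.1 ah)
              * ∏ j : {j : Fin n // i < j}, qB (ah j) (y j)) ?_
  intro x y z
  have h6 := prb_map_eq (p := p)
    (X := fun ω => (C ω i, W ω, A ω i,
        (fun j : {j : Fin n // j < i} => A ω j.1),
        (fun j : {j : Fin n // i < j} => B ω j.1),
        (fun j : {j : Fin n // i < j} => C ω j.1)))
    (fun u => (u.1, u.2.2.2.2.1, (u.2.2.1, (u.2.2.2.1, (u.2.1, u.2.2.2.2.2)))))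
    (fun u v h => by
      obtain ⟨c1, w1, a1, al1, bh1, ch1⟩ := u
      obtain ⟨c2, w2, a2, al2, bh2, ch2⟩ := v
      simp only [Prod.mk.injEq] at h ⊢
      tauto)
    (x, z.2.2.1, z.1, z.2.1, y, z.2.2.2)
  exact h6.trans ((star hqB1 hqC1 hjoint i x z.2.2.1 z.1 z.2.1 y z.2.2.2).trans (by ring))


lemma csiszar :
    ∑ i : Fin n, (CMI p (fun ω => fun j : {j : Fin n // i < j} => C ω j.1) (fun ω => A ω i) (fun ω => (W ω, fun j : {j : Fin n // j < i} => A ω j.1)) - CMI p (fun ω => fun j : {j : Fin n // j < i} => A ω j.1) (fun ω => C ω i) (fun ω => (W ω, fun j : {j : Fin n // i < j} => C ω j.1))) = 0 := by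
  classical
  have hdiff : ∀ i : Fin n,
      CMI p (fun ω => fun j : {j : Fin n // i < j} => C ω j.1) (fun ω => A ω i) (fun ω => (W ω, fun j : {j : Fin n // j < i} => A ω j.1)) - CMI p (fun ω => fun j : {j : Fin n // j < i} => A ω j.1) (fun ω => C ω i) (fun ω => (W ω, fun j : {j : Fin n // i < j} => C ω j.1))
        = (CMI p (fun ω => fun j : {j : Fin n // (j:ℕ) < (i:ℕ)+1} => A ω j.1) (fun ω => fun j : {j : Fin n // (i:ℕ)+1 ≤ (j:ℕ)} => C ω j.1) W) - (CMI p (fun ω => fun j : {j : Fin n // (j:ℕ) < (i:ℕ)} => A ω j.1) (fun ω => fun j : {j : Fin n // (i:ℕ) ≤ (j:ℕ)} => C ω j.1) W) := by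
    intro i
    have hA : CMI p (fun ω => fun j : {j : Fin n // (j:ℕ) < (i:ℕ)+1} => A ω j.1) (fun ω => fun j : {j : Fin n // (i:ℕ)+1 ≤ (j:ℕ)} => C ω j.1) W
        = CMI p (fun ω => ((fun j : {j : Fin n // j < i} => A ω j.1), A ω i))
            (fun ω => fun j : {j : Fin n // i < j} => C ω j.1) W := by
      refine CMI_congr
        (fun g => ((fun j : {j : Fin n // j < i} => g ⟨j.1, Nat.lt_succ_of_lt j.2⟩),
          g ⟨i, Nat.lt_succ_self _⟩))
        (fun t => fun j => if hj : j.1 < i then t.1 ⟨j.1, hj⟩ else t.2)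
        (fun g => fun j : {j : Fin n // i < j} => g ⟨j.1, j.2⟩)
        (fun g => fun j => g ⟨j.1, j.2⟩)
        id id (fun ω => rfl) (fun ω => ?_) (fun ω => rfl) (fun ω => rfl)
        (fun ω => rfl) (fun ω => rfl)
      funext j
      dsimp only
      split
      · rfl
      · next hj =>
          have h1 : (j.1 : ℕ) < (i : ℕ) + 1 := j.2
          have h2 : ¬ ((j.1 : ℕ) < (i : ℕ)) := by rwa [Fin.lt_def] at hj
          have : j.1 = i := Fin.ext (by omega)
          rw [this]
    have hchainA := CMI_chain (p := p) (X := (fun ω => fun j : {j : Fin n // j < i} => A ω j.1)) (Y := (fun ω => A ω i)) (Z := (fun ω => fun j : {j : Fin n // i < j} => C ω j.1)) (V := W)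
    have hB : CMI p (fun ω => fun j : {j : Fin n // (j:ℕ) < (i:ℕ)} => A ω j.1) (fun ω => fun j : {j : Fin n // (i:ℕ) ≤ (j:ℕ)} => C ω j.1) W
        = CMI p (fun ω => fun j : {j : Fin n // j < i} => A ω j.1)
            (fun ω => ((fun j : {j : Fin n // i < j} => C ω j.1), C ω i)) W := by
      refine CMI_congr
        (fun g => fun j : {j : Fin n // j < i} => g ⟨j.1, j.2⟩)
        (fun g => fun j => g ⟨j.1, j.2⟩)
        (fun g => ((fun j : {j : Fin n // i < j} => g ⟨j.1, Nat.le_of_lt j.2⟩),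
          g ⟨i, Nat.le_refl _⟩))
        (fun t => fun j => if hj : i < j.1 then t.1 ⟨j.1, hj⟩ else t.2)
        id id (fun ω => rfl) (fun ω => rfl) (fun ω => rfl) (fun ω => ?_)
        (fun ω => rfl) (fun ω => rfl)
      funext j
      dsimp only
      split
      · rfl
      · next hj =>
          have h1 : (i : ℕ) ≤ (j.1 : ℕ) := j.2
          have h2 : ¬ ((i : ℕ) < (j.1 : ℕ)) := by rwa [Fin.lt_def] at hj
          have : j.1 = i := Fin.ext (by omega)
          rw [this]
    have hBcomm : CMI p (fun ω => fun j : {j : Fin n // j < i} => A ω j.1)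
          (fun ω => ((fun j : {j : Fin n // i < j} => C ω j.1), C ω i)) W
        = CMI p (fun ω => ((fun j : {j : Fin n // i < j} => C ω j.1), C ω i))
          (fun ω => fun j : {j : Fin n // j < i} => A ω j.1) W := CMI_comm _ _ _
    have hchainB := CMI_chain (p := p) (X := (fun ω => fun j : {j : Fin n // i < j} => C ω j.1)) (Y := (fun ω => C ω i)) (Z := (fun ω => fun j : {j : Fin n // j < i} => A ω j.1)) (V := W)
    have hcomm1 : CMI p (fun ω => fun j : {j : Fin n // j < i} => A ω j.1) (fun ω => fun j : {j : Fin n // i < j} => C ω j.1) W = CMI p (fun ω => fun j : {j : Fin n // i < j} => C ω j.1) (fun ω => fun j : {j : Fin n // j < i} => A ω j.1) W := CMI_comm _ _ _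
    have m1 : CMI p (fun ω => A ω i) (fun ω => fun j : {j : Fin n // i < j} => C ω j.1) (fun ω => ((fun j : {j : Fin n // j < i} => A ω j.1), W ω))
        = CMI p (fun ω => fun j : {j : Fin n // i < j} => C ω j.1) (fun ω => A ω i) (fun ω => (W ω, fun j : {j : Fin n // j < i} => A ω j.1)) :=
      (CMI_comm _ _ _).trans (CMI_congr id id id id
        (fun t => (t.2, t.1)) (fun t => (t.2, t.1))
        (fun ω => rfl) (fun ω => rfl) (fun ω => rfl) (fun ω => rfl)
        (fun ω => rfl) (fun ω => rfl))
    have m2 : CMI p (fun ω => C ω i) (fun ω => fun j : {j : Fin n // j < i} => A ω j.1) (fun ω => ((fun j : {j : Fin n // i < j} => C ω j.1), W ω))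
        = CMI p (fun ω => fun j : {j : Fin n // j < i} => A ω j.1) (fun ω => C ω i) (fun ω => (W ω, fun j : {j : Fin n // i < j} => C ω j.1)) :=
      (CMI_comm _ _ _).trans (CMI_congr id id id id
        (fun t => (t.2, t.1)) (fun t => (t.2, t.1))
        (fun ω => rfl) (fun ω => rfl) (fun ω => rfl) (fun ω => rfl)
        (fun ω => rfl) (fun ω => rfl))
    linarith [hA, hchainA, hB, hBcomm, hchainB, hcomm1, m1, m2]
  rw [Finset.sum_congr rfl fun i _ => hdiff i]
  have hrange : ∑ i : Fin n, ((CMI p (fun ω => fun j : {j : Fin n // (j:ℕ) < (i:ℕ)+1} => A ω j.1) (fun ω => fun j : {j : Fin n // (i:ℕ)+1 ≤ (j:ℕ)} => C ω j.1) W) - (CMI p (fun ω => fun j : {j : Fin n // (j:ℕ) < (i:ℕ)} => A ω j.1) (fun ω => fun j : {j : Fin n // (i:ℕ) ≤ (j:ℕ)} => C ω j.1) W))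
      = ∑ t ∈ Finset.range n, ((CMI p (fun ω => fun j : {j : Fin n // (j:ℕ) < t+1} => A ω j.1) (fun ω => fun j : {j : Fin n // t+1 ≤ (j:ℕ)} => C ω j.1) W) - (CMI p (fun ω => fun j : {j : Fin n // (j:ℕ) < t} => A ω j.1) (fun ω => fun j : {j : Fin n // t ≤ (j:ℕ)} => C ω j.1) W)) :=
    Fin.sum_univ_eq_sum_range (fun t => (CMI p (fun ω => fun j : {j : Fin n // (j:ℕ) < t+1} => A ω j.1) (fun ω => fun j : {j : Fin n // t+1 ≤ (j:ℕ)} => C ω j.1) W) - (CMI p (fun ω => fun j : {j : Fin n // (j:ℕ) < t} => A ω j.1) (fun ω => fun j : {j : Fin n // t ≤ (j:ℕ)} => C ω j.1) W)) n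
  rw [hrange, Finset.sum_range_sub (fun t => CMI p (fun ω => fun j : {j : Fin n // (j:ℕ) < t} => A ω j.1) (fun ω => fun j : {j : Fin n // t ≤ (j:ℕ)} => C ω j.1) W) n]
  have hfn : CMI p (fun ω => fun j : {j : Fin n // (j:ℕ) < (n:ℕ)} => A ω j.1) (fun ω => fun j : {j : Fin n // (n:ℕ) ≤ (j:ℕ)} => C ω j.1) W = 0 := by
    haveI : IsEmpty {j : Fin n // (n : ℕ) ≤ (j : ℕ)} :=
      ⟨fun j => absurd j.2 (not_le.mpr j.1.isLt)⟩
    exact CMI_mid_unique _ _ _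
  have hf0 : CMI p (fun ω => fun j : {j : Fin n // (j:ℕ) < 0} => A ω j.1) (fun ω => fun j : {j : Fin n // 0 ≤ (j:ℕ)} => C ω j.1) W = 0 := by
    haveI : IsEmpty {j : Fin n // (j : ℕ) < 0} := ⟨fun j => Nat.not_lt_zero _ j.2⟩
    exact CMI_left_unique _ _ _
  rw [hfn, hf0, sub_zero]


end main

/-- First fact of the converse proof: if `B^n` and `C^n` are
produced from `A^n` by a memoryless degraded cascade (per-letter kernels
`qB : A → B`, `qC : B → C`, conditionally independent across letters and of `W`
given `A^n`), then
`∑_i I(A^{i−1}, B_{i+1}^n; C_i | W, C_{i+1}^n) ≤ ∑_i I(B_{i+1}^n; A_i | W, A^{i−1})`. -/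
theorem degraded_cascade_first_fact
    (p : Ω → ℝ) (hp : IsPMF p) {n : ℕ}
    {𝒲 α β γ : Type*} [Fintype 𝒲] [Fintype α] [Fintype β] [Fintype γ]
    (W : Ω → 𝒲) (A : Ω → Fin n → α) (B : Ω → Fin n → β) (C : Ω → Fin n → γ)
    (qB : α → β → ℝ) (qC : β → γ → ℝ)
    (hqB0 : ∀ a b, 0 ≤ qB a b) (hqB1 : ∀ a, ∑ b, qB a b = 1)
    (hqC0 : ∀ b c, 0 ≤ qC b c) (hqC1 : ∀ b, ∑ c, qC b c = 1)
    (hjoint : ∀ (w : 𝒲) (a : Fin n → α) (b : Fin n → β) (c : Fin n → γ),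
      prb p (fun ω => (W ω, A ω, B ω, C ω)) (w, a, b, c)
        = prb p (fun ω => (W ω, A ω)) (w, a) * ∏ i, (qB (a i) (b i) * qC (b i) (c i))) :
    ∑ i : Fin n,
      CMI p
        (fun ω => ((fun j : {j : Fin n // j < i} => A ω j.1),
                   (fun j : {j : Fin n // i < j} => B ω j.1)))
        (fun ω => C ω i)
        (fun ω => (W ω, fun j : {j : Fin n // i < j} => C ω j.1))
    ≤ ∑ i : Fin n,
        CMI p (fun ω => fun j : {j : Fin n // i < j} => B ω j.1)
          (fun ω => A ω i)
          (fun ω => (W ω, fun j : {j : Fin n // j < i} => A ω j.1)) := by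
  classical
  have hstep : ∀ i : Fin n,
      CMI p
        (fun ω => ((fun j : {j : Fin n // j < i} => A ω j.1),
                   (fun j : {j : Fin n // i < j} => B ω j.1)))
        (fun ω => C ω i) (fun ω => (W ω, fun j : {j : Fin n // i < j} => C ω j.1))
      ≤ CMI p (fun ω => fun j : {j : Fin n // i < j} => B ω j.1) (fun ω => A ω i) (fun ω => (W ω, fun j : {j : Fin n // j < i} => A ω j.1))
          + (CMI p (fun ω => fun j : {j : Fin n // j < i} => A ω j.1) (fun ω => C ω i) (fun ω => (W ω, fun j : {j : Fin n // i < j} => C ω j.1)) - CMI p (fun ω => fun j : {j : Fin n // i < j} => C ω j.1) (fun ω => A ω i) (fun ω => (W ω, fun j : {j : Fin n // j < i} => A ω j.1))) := by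
    intro i
    have chain1 := CMI_chain (p := p) (X := (fun ω => fun j : {j : Fin n // j < i} => A ω j.1)) (Y := (fun ω => fun j : {j : Fin n // i < j} => B ω j.1)) (Z := (fun ω => C ω i))
      (V := (fun ω => (W ω, fun j : {j : Fin n // i < j} => C ω j.1)))
    have hdpi := CMI_dpi (p := p) hp (fun ω => fun j : {j : Fin n // i < j} => B ω j.1) (fun ω => A ω i) (fun ω => C ω i)
      (fun ω => ((fun j : {j : Fin n // j < i} => A ω j.1),
        (W ω, fun j : {j : Fin n // i < j} => C ω j.1)))
      (ci2 hp hqB1 hqC1 hjoint i)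
    have e4 : CMI p (fun ω => fun j : {j : Fin n // i < j} => B ω j.1) (fun ω => A ω i)
        (fun ω => ((fun j : {j : Fin n // j < i} => A ω j.1),
          (W ω, fun j : {j : Fin n // i < j} => C ω j.1)))
        = CMI p (fun ω => fun j : {j : Fin n // i < j} => B ω j.1) (fun ω => A ω i)
        (fun ω => ((fun j : {j : Fin n // i < j} => C ω j.1),
          (W ω, fun j : {j : Fin n // j < i} => A ω j.1))) :=
      CMI_congr id id id id
        (fun t => (t.2.2, (t.2.1, t.1))) (fun t => (t.2.2, (t.2.1, t.1)))
        (fun ω => rfl) (fun ω => rfl) (fun ω => rfl) (fun ω => rfl)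
        (fun ω => rfl) (fun ω => rfl)
    have E1 := CMI_chain (p := p) (X := (fun ω => fun j : {j : Fin n // i < j} => C ω j.1)) (Y := (fun ω => fun j : {j : Fin n // i < j} => B ω j.1)) (Z := (fun ω => A ω i))
      (V := (fun ω => (W ω, fun j : {j : Fin n // j < i} => A ω j.1)))
    have E2 := CMI_chain (p := p) (X := (fun ω => fun j : {j : Fin n // i < j} => B ω j.1)) (Y := (fun ω => fun j : {j : Fin n // i < j} => C ω j.1)) (Z := (fun ω => A ω i))
      (V := (fun ω => (W ω, fun j : {j : Fin n // j < i} => A ω j.1)))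
    have E3 : CMI p (fun ω => ((fun j : {j : Fin n // i < j} => C ω j.1),
          (fun j : {j : Fin n // i < j} => B ω j.1))) (fun ω => A ω i) (fun ω => (W ω, fun j : {j : Fin n // j < i} => A ω j.1))
        = CMI p (fun ω => ((fun j : {j : Fin n // i < j} => B ω j.1),
          (fun j : {j : Fin n // i < j} => C ω j.1))) (fun ω => A ω i) (fun ω => (W ω, fun j : {j : Fin n // j < i} => A ω j.1)) :=
      CMI_congr (fun t => (t.2, t.1)) (fun t => (t.2, t.1)) id id id id
        (fun ω => rfl) (fun ω => rfl) (fun ω => rfl) (fun ω => rfl)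
        (fun ω => rfl) (fun ω => rfl)
    have hci1 := ci1 hp hqB1 hqC1 hjoint i
    linarith [chain1, hdpi, e4, E1, E2, E3, hci1]
  calc ∑ i : Fin n,
      CMI p
        (fun ω => ((fun j : {j : Fin n // j < i} => A ω j.1),
                   (fun j : {j : Fin n // i < j} => B ω j.1)))
        (fun ω => C ω i) (fun ω => (W ω, fun j : {j : Fin n // i < j} => C ω j.1))
      ≤ ∑ i : Fin n, (CMI p (fun ω => fun j : {j : Fin n // i < j} => B ω j.1) (fun ω => A ω i) (fun ω => (W ω, fun j : {j : Fin n // j < i} => A ω j.1))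
          + (CMI p (fun ω => fun j : {j : Fin n // j < i} => A ω j.1) (fun ω => C ω i) (fun ω => (W ω, fun j : {j : Fin n // i < j} => C ω j.1)) - CMI p (fun ω => fun j : {j : Fin n // i < j} => C ω j.1) (fun ω => A ω i) (fun ω => (W ω, fun j : {j : Fin n // j < i} => A ω j.1)))) :=
        Finset.sum_le_sum fun i _ => hstep i
    _ = ∑ i : Fin n, CMI p (fun ω => fun j : {j : Fin n // i < j} => B ω j.1) (fun ω => A ω i) (fun ω => (W ω, fun j : {j : Fin n // j < i} => A ω j.1))
          - ∑ i : Fin n, (CMI p (fun ω => fun j : {j : Fin n // i < j} => C ω j.1) (fun ω => A ω i) (fun ω => (W ω, fun j : {j : Fin n // j < i} => A ω j.1))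
              - CMI p (fun ω => fun j : {j : Fin n // j < i} => A ω j.1) (fun ω => C ω i) (fun ω => (W ω, fun j : {j : Fin n // i < j} => C ω j.1))) := by
        rw [← Finset.sum_sub_distrib]
        exact Finset.sum_congr rfl fun i _ => by ring
    _ = ∑ i : Fin n, CMI p (fun ω => fun j : {j : Fin n // i < j} => B ω j.1) (fun ω => A ω i) (fun ω => (W ω, fun j : {j : Fin n // j < i} => A ω j.1)) := by
        rw [csiszar]
        ring


end BRSec
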